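/- Let (X, {d_r}) satisfy the weaker d_r-axioms and, for n ∈ ℕ, set W_n = {(x,y) ∈ X × X | d_{3^{2n}}(x,y) < 3^{-n}}. Then for every n ∈ ℕ, W_{n+1} ∘ W_{n+1} ∘ W_{n+1} ⊆ W_n. -/

import Mathlib

open ENNReal

/-- The weaker `d_r`-axioms for a family of metric-like functions
`d : ℝ → X → X → ℝ≥0∞` indexed by `r > 0`. -/
structure WeakerDr {X : Type*} (d : ℝ → X → X → ℝ≥0∞) : Prop where
  self : ∀ (x : X) (r : ℝ), 0 < r → d r x x = 0
  mono : ∀ (x y : X) (r₁ r₂ : ℝ), 0 < r₁ → r₁ ≤ r₂ → d r₁ x y ≤ d r₂ x y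
  usc : ∀ (x y : X) (r ε : ℝ), 0 < r → 0 < ε → d r x y < ENNReal.ofReal ε →
    ∃ δ : ℝ, 0 < δ ∧ d (r + δ) x y < ENNReal.ofReal ε
  weaker_tri : ∀ (x y z : X) (r₁ r₂ r₃ : ℝ), 0 < r₁ → 0 < r₂ → 0 < r₃ →
    d (r₁ + r₂ + r₃) x y < ENNReal.ofReal r₃ → d (r₁ + r₂ + r₃) y z < ENNReal.ofReal r₂ →
    d r₁ x z ≤ d (r₁ + r₂ + r₃) x y + d (r₁ + r₂ + r₃) y z

/-- The basic entourage `U_{r,ε} = {(x,y) | d_r(x,y) < ε}`. -/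
def entourageDr {X : Type*} (d : ℝ → X → X → ℝ≥0∞) (r ε : ℝ) : Set (X × X) :=
  {p | d r p.1 p.2 < ENNReal.ofReal ε}

/-- `W_n = {(x,y) | d_{3^{2n}}(x,y) < 3^{-n}}`. -/
def Wrel {X : Type*} (d : ℝ → X → X → ℝ≥0∞) (n : ℕ) : Set (X × X) :=
  {p | d ((3 : ℝ) ^ (2 * n)) p.1 p.2 < ENNReal.ofReal (((3 : ℝ) ^ n)⁻¹)}

theorem stmt_11 {X : Type*} (d : ℝ → X → X → ℝ≥0∞) (h : WeakerDr d) (n : ℕ) :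
    SetRel.comp (SetRel.comp (Wrel d (n + 1)) (Wrel d (n + 1))) (Wrel d (n + 1)) ⊆ Wrel d n := by
  rintro ⟨x, w⟩ ⟨z, ⟨y, hxy, hyz⟩, hzw⟩
  simp only [Wrel, Set.mem_setOf_eq] at hxy hyz hzw ⊢
  set ε : ℝ := ((3 : ℝ) ^ (n + 1))⁻¹ with hεdef
  set R : ℝ := (3 : ℝ) ^ (2 * (n + 1)) with hRdef
  set r : ℝ := (3 : ℝ) ^ (2 * n) with hrdef
  have hr1 : (1 : ℝ) ≤ r := one_le_pow₀ (by norm_num)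
  have hεpos : 0 < ε := by positivity
  have hε3 : ε ≤ 1 / 3 := by
    rw [hεdef]
    rw [inv_le_comm₀ (by positivity) (by norm_num)]
    calc ((1:ℝ)/3)⁻¹ = 3 := by norm_num
    _ ≤ (3:ℝ) ^ (n+1) := le_self_pow₀ (by norm_num) (by omega)
  have hR9 : R = 9 * r := by
    rw [hRdef, hrdef, show 2 * (n + 1) = 2 * n + 2 by ring, pow_add]; ring
  have h1 : d (R - 2 * ε) x z ≤ d R x y + d R y z := by
    have e : R - 2 * ε + ε + ε = R := by ring
    have := h.weaker_tri x y z (R - 2 * ε) ε ε (by nlinarith) hεpos hεpos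
      (by rw [e]; exact hxy) (by rw [e]; exact hyz)
    rwa [e] at this
  have h2 : d (R - 2 * ε) x z < ENNReal.ofReal (2 * ε) := by
    refine lt_of_le_of_lt h1 ?_
    calc d R x y + d R y z < ENNReal.ofReal ε + ENNReal.ofReal ε :=
      ENNReal.add_lt_add hxy hyz
    _ = ENNReal.ofReal (2 * ε) := by
      rw [← ENNReal.ofReal_add hεpos.le hεpos.le]; ring_nf
  set S : ℝ := r + ε + 2 * ε with hSdef
  have hSpos : 0 < S := by nlinarith
  have h3 : d S x z < ENNReal.ofReal (2 * ε) :=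
    lt_of_le_of_lt (h.mono x z S (R - 2 * ε) hSpos (by nlinarith)) h2
  have h4 : d S z w < ENNReal.ofReal ε :=
    lt_of_le_of_lt (h.mono z w S R hSpos (by nlinarith)) hzw
  have h5 : d r x w ≤ d S x z + d S z w :=
    h.weaker_tri x z w r ε (2 * ε) (by positivity) hεpos (by positivity) h3 h4
  refine lt_of_le_of_lt h5 ?_
  calc d S x z + d S z w < ENNReal.ofReal (2 * ε) + ENNReal.ofReal ε :=
    ENNReal.add_lt_add h3 h4
  _ = ENNReal.ofReal (((3:ℝ) ^ n)⁻¹) := by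
    rw [← ENNReal.ofReal_add (by positivity) hεpos.le]
    congr 1
    rw [hεdef, pow_succ]
    field_simp
    ring
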